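/- Let f : ℂ² → ℂ satisfy f(x,y) = f(y,x) for all x,y, let x₁,…,x_k ∈ ℂ and y₁,…,y_k ∈ ℂ \ {0}. Then the Pfaffian of the 2k×2k skew-symmetric matrix whose (j,l) 2×2 block is f(x_j,x_l) · [[(y_j−y_l)/(2 y_j y_l), (y_j+y_l)/(2 y_j y_l)],[−(y_j+y_l)/(2 y_j y_l), −(y_j−y_l)/(2 y_j y_l)]], multiplied by ∏_{j=1}^k y_j, equals det[f(x_j,x_l)]_{j,l=1}^k. -/

import Mathlib

open Matrix Finset

/-- The Pfaffian of a `2k × 2k` complex matrix, via the standard combinatorial formula. -/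
noncomputable def pfaffian {k : ℕ} (A : Matrix (Fin (2*k)) (Fin (2*k)) ℂ) : ℂ :=
  (1 / ((2:ℂ)^k * (Nat.factorial k : ℂ))) *
    ∑ σ : Equiv.Perm (Fin (2*k)), ((Equiv.Perm.sign σ : ℤ) : ℂ) *
      ∏ i : Fin k, A (σ ⟨2*i.1, by have := i.2; omega⟩) (σ ⟨2*i.1+1, by have := i.2; omega⟩)

namespace PfAux

variable {k : ℕ}

def ev (i : Fin k) : Fin (2*k) := ⟨2*i.1, by have := i.2; omega⟩
def od (i : Fin k) : Fin (2*k) := ⟨2*i.1+1, by have := i.2; omega⟩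
def hv (p : Fin (2*k)) : Fin k := ⟨p.1/2, Nat.div_lt_of_lt_mul p.2⟩

@[simp] lemma hv_ev (i : Fin k) : hv (ev i) = i := by
  apply Fin.ext; show 2*i.1/2 = i.1; omega
@[simp] lemma hv_od (i : Fin k) : hv (od i) = i := by
  apply Fin.ext; show (2*i.1+1)/2 = i.1; omega
@[simp] lemma ev_mod (i : Fin k) : (ev i).1 % 2 = 0 := by show 2*i.1 % 2 = 0; omega
@[simp] lemma od_mod (i : Fin k) : (od i).1 % 2 = 1 := by show (2*i.1+1) % 2 = 1; omega
lemma ev_val (i : Fin k) : (ev i).1 = 2*i.1 := rfl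
lemma od_val (i : Fin k) : (od i).1 = 2*i.1+1 := rfl

lemma ev_injective : Function.Injective (ev (k := k)) := by
  intro a b h; simp [ev, Fin.ext_iff] at h ⊢; omega
lemma od_injective : Function.Injective (od (k := k)) := by
  intro a b h; simp [od, Fin.ext_iff] at h ⊢; omega
lemma ev_ne_od (i j : Fin k) : ev i ≠ od j := by
  simp [ev, od, Fin.ext_iff]; omega

def e2 : Fin k × Fin 2 ≃ Fin (2*k) where
  toFun x := ⟨2*x.1.1 + x.2.1, by have := x.1.2; have := x.2.2; omega⟩
  invFun p := (⟨p.1/2, Nat.div_lt_of_lt_mul p.2⟩, ⟨p.1 % 2, by omega⟩)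
  left_inv x := by
    ext
    · simp; omega
    · simp; omega
  right_inv p := by simp [Fin.ext_iff]; omega

lemma e2_zero (i : Fin k) : e2 (i, 0) = ev i := by simp [e2, ev, Fin.ext_iff]
lemma e2_one (i : Fin k) : e2 (i, 1) = od i := by simp [e2, od, Fin.ext_iff]

lemma prod_fin2k {M : Type*} [CommMonoid M] (h : Fin (2*k) → M) :
    ∏ p, h p = ∏ i : Fin k, (h (ev i) * h (od i)) := by
  rw [← Equiv.prod_comp (e2 (k := k)) h, Fintype.prod_prod_type]
  refine Finset.prod_congr rfl fun i _ => ?_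
  rw [Fin.prod_univ_two, e2_zero, e2_one]

lemma sum_fin2k {M : Type*} [AddCommMonoid M] (h : Fin (2*k) → M) :
    ∑ p, h p = ∑ i : Fin k, (h (ev i) + h (od i)) := by
  rw [← Equiv.sum_comp (e2 (k := k)) h, Fintype.sum_prod_type]
  refine Finset.sum_congr rfl fun i _ => ?_
  rw [Fin.sum_univ_two, e2_zero, e2_one]

lemma pfaffian_eq (A : Matrix (Fin (2*k)) (Fin (2*k)) ℂ) :
    pfaffian A = (1 / ((2:ℂ)^k * (Nat.factorial k : ℂ))) *
    ∑ σ : Equiv.Perm (Fin (2*k)), ((Equiv.Perm.sign σ : ℤ) : ℂ) *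
      ∏ i : Fin k, A (σ (ev i)) (σ (od i)) := rfl

end PfAux
open Matrix Finset PfAux Equiv.Perm

namespace PfAux
variable {k : ℕ}

/-- equiv between pair-functions and functions on `Fin (2*k)`. -/
def we : (Fin k → Fin (2*k) × Fin (2*k)) ≃ (Fin (2*k) → Fin (2*k)) where
  toFun w := fun p => if p.1 % 2 = 0 then (w (hv p)).1 else (w (hv p)).2
  invFun g := fun i => (g (ev i), g (od i))
  left_inv w := by
    funext i
    show ((if (ev i).1 % 2 = 0 then (w (hv (ev i))).1 else (w (hv (ev i))).2),
          (if (od i).1 % 2 = 0 then (w (hv (od i))).1 else (w (hv (od i))).2)) = w i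
    rw [if_pos (ev_mod i), if_neg (by rw [od_mod]; omega), hv_ev, hv_od]
  right_inv g := by
    funext p
    rcases Nat.even_or_odd p.1 with h | h
    · have h0 : p.1 % 2 = 0 := Nat.even_iff.mp h
      have : ev (hv p) = p := by apply Fin.ext; show 2*(p.1/2) = p.1; omega
      simp [h0, this]
    · have h1 : p.1 % 2 = 1 := Nat.odd_iff.mp h
      have : od (hv p) = p := by apply Fin.ext; show 2*(p.1/2)+1 = p.1; omega
      simp [h1, this]

@[simp] lemma we_ev (w : Fin k → Fin (2*k) × Fin (2*k)) (i : Fin k) :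
    we w (ev i) = (w i).1 := by
  simp only [we, Equiv.coe_fn_mk, ev_mod, hv_ev]
  norm_num
@[simp] lemma we_od (w : Fin k → Fin (2*k) × Fin (2*k)) (i : Fin k) :
    we w (od i) = (w i).2 := by
  simp only [we, Equiv.coe_fn_mk, od_mod, hv_od]
  norm_num

lemma pf_congruence (A B : Matrix (Fin (2*k)) (Fin (2*k)) ℂ) :
    pfaffian (Bᵀ * A * B) = B.det * pfaffian A := by
  rw [pfaffian_eq, pfaffian_eq]
  have hBAB : ∀ p q, (Bᵀ * A * B) p q
      = ∑ z : Fin (2*k) × Fin (2*k), B z.1 p * A z.1 z.2 * B z.2 q := by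
    intro p q
    rw [Fintype.sum_prod_type, Finset.sum_comm]
    simp only [Matrix.mul_apply, Matrix.transpose_apply, Finset.sum_mul]
  have key : (∑ σ : Equiv.Perm (Fin (2*k)), ((sign σ : ℤ) : ℂ) *
      ∏ i : Fin k, (Bᵀ * A * B) (σ (ev i)) (σ (od i)))
      = B.det * ∑ σ : Equiv.Perm (Fin (2*k)), ((sign σ : ℤ) : ℂ) *
          ∏ i : Fin k, A (σ (ev i)) (σ (od i)) := calc
    ∑ σ : Equiv.Perm (Fin (2*k)), ((sign σ : ℤ) : ℂ) *
        ∏ i : Fin k, (Bᵀ * A * B) (σ (ev i)) (σ (od i))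
      = ∑ σ : Equiv.Perm (Fin (2*k)), ∑ w : Fin k → Fin (2*k) × Fin (2*k),
          ((sign σ : ℤ) : ℂ) * ∏ i : Fin k,
            (B (w i).1 (σ (ev i)) * A (w i).1 (w i).2 * B (w i).2 (σ (od i))) := by
        refine Finset.sum_congr rfl fun σ _ => ?_
        rw [← Finset.mul_sum]
        congr 1
        simp only [hBAB]
        rw [Finset.prod_univ_sum (fun _ => (univ : Finset (Fin (2*k) × Fin (2*k))))
          (fun i z => B z.1 (σ (ev i)) * A z.1 z.2 * B z.2 (σ (od i)))]
        rw [Fintype.piFinset_univ]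
    _ = ∑ w : Fin k → Fin (2*k) × Fin (2*k),
          (∏ i : Fin k, A (w i).1 (w i).2) *
          ∑ σ : Equiv.Perm (Fin (2*k)), ((sign σ : ℤ) : ℂ) *
            ∏ p : Fin (2*k), B (we w p) (σ p) := by
        rw [Finset.sum_comm]
        refine Finset.sum_congr rfl fun w _ => ?_
        rw [Finset.mul_sum]
        refine Finset.sum_congr rfl fun σ _ => ?_
        rw [prod_fin2k (fun p => B (we w p) (σ p))]
        simp only [we_ev, we_od, Finset.prod_mul_distrib]
        ring
    _ = ∑ w : Fin k → Fin (2*k) × Fin (2*k),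
          (∏ i : Fin k, A (w i).1 (w i).2) * (B.submatrix (we w) id).det := by
        refine Finset.sum_congr rfl fun w _ => ?_
        congr 1
        rw [← Matrix.det_transpose (B.submatrix (we w) id), Matrix.det_apply']
        refine Finset.sum_congr rfl fun σ _ => rfl
    _ = ∑ g : Fin (2*k) → Fin (2*k),
          (∏ i : Fin k, A (g (ev i)) (g (od i))) * (B.submatrix g id).det := by
        rw [← Equiv.sum_comp (we (k := k))
          (fun g => (∏ i : Fin k, A (g (ev i)) (g (od i))) * (B.submatrix g id).det)]
        refine Finset.sum_congr rfl fun w _ => ?_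
        simp only [we_ev, we_od]
    _ = ∑ g : Fin (2*k) → Fin (2*k) with Function.Bijective g,
          (∏ i : Fin k, A (g (ev i)) (g (od i))) * (B.submatrix g id).det := by
        refine (Finset.sum_subset (filter_subset _ _) fun g _ hbij => ?_).symm
        have : ¬ Function.Injective g := fun hinj =>
          hbij (mem_filter.2 ⟨mem_univ _, Finite.injective_iff_bijective.mp hinj⟩)
        rw [Function.Injective] at this
        push_neg at this
        obtain ⟨p, q, hpq, hne⟩ := this
        have : (B.submatrix g id).det = 0 :=
          Matrix.det_zero_of_row_eq hne (by funext c; simp [Matrix.submatrix, hpq])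
        rw [this, mul_zero]
    _ = ∑ e : Equiv.Perm (Fin (2*k)),
          (∏ i : Fin k, A (e (ev i)) (e (od i))) * (B.submatrix e id).det := by
        refine Finset.sum_bij (fun g h => Equiv.ofBijective g (mem_filter.1 h).2)
          (fun _ _ => mem_univ _) (fun _ _ _ _ h => by injection h)
          (fun e _ => ⟨e, mem_filter.2 ⟨mem_univ _, e.bijective⟩, Equiv.coe_fn_injective rfl⟩)
          (fun _ _ => rfl)
    _ = B.det * ∑ σ : Equiv.Perm (Fin (2*k)), ((sign σ : ℤ) : ℂ) *
          ∏ i : Fin k, A (σ (ev i)) (σ (od i)) := by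
        rw [Finset.mul_sum]
        refine Finset.sum_congr rfl fun e _ => ?_
        rw [Matrix.det_permute]
        ring
  rw [key]; ring

end PfAux
namespace PfAux
open Equiv.Perm
variable {k : ℕ}

def jsgn (p q : Fin (2*k)) : ℂ :=
  if p.1 % 2 = 0 then (if q.1 % 2 = 0 then 0 else 1)
  else (if q.1 % 2 = 0 then -1 else 0)

lemma jsgn_ev_od (i j : Fin k) : jsgn (ev i) (od j) = 1 := by
  simp [jsgn, ev_mod, od_mod]

lemma jsgn_od_ev (i j : Fin k) : jsgn (od i) (ev j) = -1 := by
  simp [jsgn, ev_mod, od_mod]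

lemma jsgn_eq_zero {p q : Fin (2*k)} (h : p.1 % 2 = q.1 % 2) : jsgn p q = 0 := by
  rcases Nat.mod_two_eq_zero_or_one p.1 with h0 | h0 <;>
    [ (have hq : q.1 % 2 = 0 := by omega);
      (have hq : q.1 % 2 = 1 := by omega) ] <;>
    simp [jsgn, h0, hq]

def FJ (F : Matrix (Fin k) (Fin k) ℂ) : Matrix (Fin (2*k)) (Fin (2*k)) ℂ :=
  Matrix.of fun p q => F (hv p) (hv q) * jsgn p q

lemma ev_hv {p : Fin (2*k)} (h : p.1 % 2 = 0) : ev (hv p) = p := by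
  apply Fin.ext; show 2*(p.1/2) = p.1; omega

lemma od_hv {p : Fin (2*k)} (h : p.1 % 2 = 1) : od (hv p) = p := by
  apply Fin.ext; show 2*(p.1/2)+1 = p.1; omega

lemma ev_or_od (p : Fin (2*k)) : p = ev (hv p) ∨ p = od (hv p) := by
  rcases Nat.mod_two_eq_zero_or_one p.1 with h | h
  · exact Or.inl (ev_hv h).symm
  · exact Or.inr (od_hv h).symm

def Xi (a b : Equiv.Perm (Fin k)) (s : Fin k → Bool) : Equiv.Perm (Fin (2*k)) :=
  e2.permCongr
    ((Equiv.prodCongrLeft (fun ε : Fin 2 => if ε = 0 then a else b)) *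
     (Equiv.prodCongrRight (fun i => if s i then Equiv.swap (0 : Fin 2) 1 else 1)))

lemma e2_symm_ev (i : Fin k) : (e2 (k := k)).symm (ev i) = (i, 0) := by
  rw [Equiv.symm_apply_eq, e2_zero]

lemma e2_symm_od (i : Fin k) : (e2 (k := k)).symm (od i) = (i, 1) := by
  rw [Equiv.symm_apply_eq, e2_one]

lemma Xi_ev (a b : Equiv.Perm (Fin k)) (s : Fin k → Bool) (i : Fin k) :
    Xi a b s (ev i) = if s i then od (b i) else ev (a i) := by
  cases hsi : s i <;>
    simp [Xi, Equiv.permCongr_apply, e2_symm_ev, e2_symm_od, Equiv.Perm.mul_apply,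
      Equiv.prodCongrRight_apply, Equiv.prodCongrLeft_apply, hsi,
      Equiv.swap_apply_left, e2_zero, e2_one]

lemma Xi_od (a b : Equiv.Perm (Fin k)) (s : Fin k → Bool) (i : Fin k) :
    Xi a b s (od i) = if s i then ev (a i) else od (b i) := by
  cases hsi : s i <;>
    simp [Xi, Equiv.permCongr_apply, e2_symm_od, e2_symm_ev, Equiv.Perm.mul_apply,
      Equiv.prodCongrRight_apply, Equiv.prodCongrLeft_apply, hsi,
      Equiv.swap_apply_right, e2_zero, e2_one]

lemma sign_Xi_cast (a b : Equiv.Perm (Fin k)) (s : Fin k → Bool) :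
    ((Equiv.Perm.sign (Xi a b s) : ℤ) : ℂ)
      = ((Equiv.Perm.sign a : ℤ) : ℂ) * ((Equiv.Perm.sign b : ℤ) : ℂ) *
        ∏ i : Fin k, (if s i then (-1 : ℂ) else 1) := by
  have h1 : Equiv.Perm.sign (Xi a b s)
      = (Equiv.Perm.sign a * Equiv.Perm.sign b) *
        ∏ i : Fin k, (if s i then (-1 : ℤˣ) else 1) := by
    rw [Xi, Equiv.Perm.sign_permCongr, _root_.map_mul, Equiv.Perm.sign_prodCongrLeft,
      Equiv.Perm.sign_prodCongrRight]
    congr 1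
    · rw [Fin.prod_univ_two]
      norm_num
    · refine Finset.prod_congr rfl fun i _ => ?_
      cases hsi : s i
      · simp
      · simp [Equiv.Perm.sign_swap (show (0 : Fin 2) ≠ 1 by decide)]
  rw [h1]
  push_cast
  congr 1
  refine Finset.prod_congr rfl fun i _ => ?_
  cases hsi : s i <;> simp [hsi]

lemma Xi_inj {a b a' b' : Equiv.Perm (Fin k)} {s s' : Fin k → Bool}
    (h : Xi a b s = Xi a' b' s') : a = a' ∧ b = b' ∧ s = s' := by
  have hev : ∀ i, Xi a b s (ev i) = Xi a' b' s' (ev i) := fun i => by rw [h]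
  have hod : ∀ i, Xi a b s (od i) = Xi a' b' s' (od i) := fun i => by rw [h]
  have hs : s = s' := by
    funext i
    have h1 := hev i
    rw [Xi_ev, Xi_ev] at h1
    cases hsi : s i <;> cases hsi' : s' i <;> rw [hsi, hsi'] at h1 <;>
      norm_num at h1
    all_goals first
      | rfl
      | exact absurd h1 (ev_ne_od _ _)
      | exact absurd h1.symm (ev_ne_od _ _)
  subst hs
  refine ⟨Equiv.ext fun i => ?_, Equiv.ext fun i => ?_, rfl⟩
  · cases hsi : s i
    · have h1 := hev i; rw [Xi_ev, Xi_ev, hsi] at h1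
      norm_num at h1
      exact ev_injective h1
    · have h1 := hod i; rw [Xi_od, Xi_od, hsi] at h1
      norm_num at h1
      exact ev_injective h1
  · cases hsi : s i
    · have h1 := hod i; rw [Xi_od, Xi_od, hsi] at h1
      norm_num at h1
      exact od_injective h1
    · have h1 := hev i; rw [Xi_ev, Xi_ev, hsi] at h1
      norm_num at h1
      exact od_injective h1

lemma Xi_surj (σ : Equiv.Perm (Fin (2*k)))
    (hσ : ∀ i : Fin k, (σ (ev i)).1 % 2 ≠ (σ (od i)).1 % 2) :
    ∃ a b s, Xi a b s = σ := by
  classical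
  have hs2 : ∀ p : Fin (2*k), p.1 % 2 = 0 ∨ p.1 % 2 = 1 :=
    fun p => Nat.mod_two_eq_zero_or_one _
  set s : Fin k → Bool := fun i => decide ((σ (ev i)).1 % 2 = 1) with hsdef
  have hst : ∀ i, s i = true → (σ (ev i)).1 % 2 = 1 := fun i h => of_decide_eq_true h
  have hsf : ∀ i, s i = false → (σ (ev i)).1 % 2 = 0 := fun i h => by
    have := of_decide_eq_false h
    omega
  have hα0 : ∀ i, (σ (if s i then od i else ev i)).1 % 2 = 0 := by
    intro i
    cases hsi : s i
    · norm_num; exact hsf i hsi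
    · have h1 := hst i hsi
      have h2 := hσ i
      have h3 := hs2 (σ (od i))
      norm_num; omega
  have hβ1 : ∀ i, (σ (if s i then ev i else od i)).1 % 2 = 1 := by
    intro i
    cases hsi : s i
    · have h1 := hsf i hsi
      have h2 := hσ i
      have h3 := hs2 (σ (od i))
      norm_num; omega
    · norm_num; exact hst i hsi
  set α : Fin k → Fin k := fun i => hv (σ (if s i then od i else ev i)) with hαdef
  set β : Fin k → Fin k := fun i => hv (σ (if s i then ev i else od i)) with hβdef
  have hevα : ∀ i, ev (α i) = σ (if s i then od i else ev i) := fun i => ev_hv (hα0 i)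
  have hodβ : ∀ i, od (β i) = σ (if s i then ev i else od i) := fun i => od_hv (hβ1 i)
  have hαinj : Function.Injective α := by
    intro i j hij
    have h1 : σ (if s i then od i else ev i) = σ (if s j then od j else ev j) := by
      rw [← hevα i, ← hevα j, hij]
    have h2 := σ.injective h1
    have h3 := congrArg Fin.val h2
    split_ifs at h3 <;> simp only [ev_val, od_val] at h3 <;> exact Fin.ext (by omega)
  have hβinj : Function.Injective β := by
    intro i j hij
    have h1 : σ (if s i then ev i else od i) = σ (if s j then ev j else od j) := by
      rw [← hodβ i, ← hodβ j, hij]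
    have h2 := σ.injective h1
    have h3 := congrArg Fin.val h2
    split_ifs at h3 <;> simp only [ev_val, od_val] at h3 <;> exact Fin.ext (by omega)
  refine ⟨Equiv.ofBijective α (Finite.injective_iff_bijective.mp hαinj),
          Equiv.ofBijective β (Finite.injective_iff_bijective.mp hβinj), s, ?_⟩
  apply Equiv.ext
  intro p
  rcases ev_or_od p with hp | hp <;> rw [hp]
  · rw [Xi_ev]
    cases hsi : s (hv p)
    · norm_num
      show ev (α (hv p)) = _
      rw [hevα, hsi]
      norm_num
    · norm_num
      show od (β (hv p)) = _
      rw [hodβ, hsi]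
      norm_num
  · rw [Xi_od]
    cases hsi : s (hv p)
    · norm_num
      show od (β (hv p)) = _
      rw [hodβ, hsi]
      norm_num
    · norm_num
      show ev (α (hv p)) = _
      rw [hevα, hsi]
      norm_num

lemma FJ_term (F : Matrix (Fin k) (Fin k) ℂ) (hF : ∀ i j, F i j = F j i)
    (a b : Equiv.Perm (Fin k)) (s : Fin k → Bool) (i : Fin k) :
    FJ F (Xi a b s (ev i)) (Xi a b s (od i))
      = (if s i then (-1:ℂ) else 1) * F (a i) (b i) := by
  rw [Xi_ev, Xi_od]
  cases hsi : s i <;> norm_num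
  · show F (hv (ev (a i))) (hv (od (b i))) * jsgn (ev (a i)) (od (b i)) = _
    rw [jsgn_ev_od, hv_ev, hv_od, mul_one]
  · show F (hv (od (b i))) (hv (ev (a i))) * jsgn (od (b i)) (ev (a i)) = _
    rw [jsgn_od_ev, hv_od, hv_ev, hF (b i) (a i)]
    ring

lemma pf_FJ (F : Matrix (Fin k) (Fin k) ℂ) (hF : ∀ i j, F i j = F j i) :
    pfaffian (FJ F) = F.det := by
  classical
  rw [pfaffian_eq]
  have sq1 : ∀ s : Fin k → Bool,
      (∏ i : Fin k, (if s i then (-1:ℂ) else 1)) *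
      (∏ i : Fin k, (if s i then (-1:ℂ) else 1)) = 1 := by
    intro s
    rw [← Finset.prod_mul_distrib]
    apply Finset.prod_eq_one
    intro i _
    cases hsi : s i <;> norm_num
  have hinner : ∀ a : Equiv.Perm (Fin k),
      (∑ b : Equiv.Perm (Fin k), ((Equiv.Perm.sign a : ℤ):ℂ) * ((Equiv.Perm.sign b : ℤ):ℂ) *
        ∏ i : Fin k, F (a i) (b i)) = F.det := by
    intro a
    have hsa : ((Equiv.Perm.sign a : ℤ):ℂ) * ((Equiv.Perm.sign a : ℤ):ℂ) = 1 := by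
      rcases Int.units_eq_one_or (Equiv.Perm.sign a) with h | h <;> rw [h] <;> norm_num
    rw [← Equiv.sum_comp (Equiv.mulRight a)
      (fun b => ((Equiv.Perm.sign a : ℤ):ℂ) * ((Equiv.Perm.sign b : ℤ):ℂ) *
        ∏ i : Fin k, F (a i) (b i))]
    have : ∀ τ : Equiv.Perm (Fin k),
        ((Equiv.Perm.sign a : ℤ):ℂ) * ((Equiv.Perm.sign (τ * a) : ℤ):ℂ) *
          ∏ i : Fin k, F (a i) ((τ * a) i)
        = ((Equiv.Perm.sign τ : ℤ):ℂ) * ∏ j : Fin k, F j (τ j) := by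
      intro τ
      have h2 : ∏ i : Fin k, F (a i) ((τ * a) i) = ∏ j : Fin k, F j (τ j) :=
        Equiv.prod_comp a (fun j => F j (τ j))
      rw [h2, Equiv.Perm.sign_mul]
      push_cast
      rw [show ((Equiv.Perm.sign a : ℤ):ℂ) * (((Equiv.Perm.sign τ : ℤ):ℂ) * ((Equiv.Perm.sign a : ℤ):ℂ))
        = (((Equiv.Perm.sign a : ℤ):ℂ) * ((Equiv.Perm.sign a : ℤ):ℂ)) * ((Equiv.Perm.sign τ : ℤ):ℂ) by ring, hsa]
      ring
    calc ∑ τ : Equiv.Perm (Fin k), ((Equiv.Perm.sign a : ℤ):ℂ) *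
            ((Equiv.Perm.sign ((Equiv.mulRight a) τ) : ℤ):ℂ) *
            ∏ i : Fin k, F (a i) (((Equiv.mulRight a) τ) i)
        = ∑ τ : Equiv.Perm (Fin k), ((Equiv.Perm.sign τ : ℤ):ℂ) * ∏ j : Fin k, F j (τ j) := by
          exact Finset.sum_congr rfl fun τ _ => this τ
      _ = F.det := by
          rw [← Matrix.det_transpose F, Matrix.det_apply']
          exact Finset.sum_congr rfl fun τ _ => rfl
  have main : (∑ σ : Equiv.Perm (Fin (2*k)), ((Equiv.Perm.sign σ : ℤ):ℂ) *
        ∏ i : Fin k, FJ F (σ (ev i)) (σ (od i)))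
      = (2:ℂ)^k * (Nat.factorial k : ℂ) * F.det := by
    calc
      ∑ σ : Equiv.Perm (Fin (2*k)), ((Equiv.Perm.sign σ : ℤ):ℂ) *
          ∏ i : Fin k, FJ F (σ (ev i)) (σ (od i))
        = ∑ σ : Equiv.Perm (Fin (2*k)) with
            (∀ i : Fin k, (σ (ev i)).1 % 2 ≠ (σ (od i)).1 % 2),
            ((Equiv.Perm.sign σ : ℤ):ℂ) * ∏ i : Fin k, FJ F (σ (ev i)) (σ (od i)) := by
          refine (Finset.sum_subset (filter_subset _ _) fun σ _ hσ => ?_).symm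
          simp only [mem_filter, mem_univ, true_and, not_forall, not_not] at hσ
          obtain ⟨i, hi⟩ := hσ
          have : FJ F (σ (ev i)) (σ (od i)) = 0 := by
            show F _ _ * jsgn (σ (ev i)) (σ (od i)) = 0
            rw [jsgn_eq_zero hi, mul_zero]
          rw [Finset.prod_eq_zero (mem_univ i) this, mul_zero]
      _ = ∑ t : Equiv.Perm (Fin k) × Equiv.Perm (Fin k) × (Fin k → Bool),
            ((Equiv.Perm.sign (Xi t.1 t.2.1 t.2.2) : ℤ):ℂ) *
            ∏ i : Fin k, FJ F (Xi t.1 t.2.1 t.2.2 (ev i)) (Xi t.1 t.2.1 t.2.2 (od i)) := by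
          refine (Finset.sum_bij (fun t _ => Xi t.1 t.2.1 t.2.2) ?_ ?_ ?_ ?_).symm
          · intro t _
            refine mem_filter.2 ⟨mem_univ _, fun i => ?_⟩
            rw [Xi_ev, Xi_od]
            cases hsi : t.2.2 i <;> simp
          · intro t1 _ t2 _ h
            obtain ⟨h1, h2, h3⟩ := Xi_inj h
            exact Prod.ext h1 (Prod.ext h2 h3)
          · intro σ hσ
            obtain ⟨a, b, s, h⟩ := Xi_surj σ (mem_filter.1 hσ).2
            exact ⟨(a, b, s), mem_univ _, h⟩
          · intro t _
            rfl
      _ = ∑ t : Equiv.Perm (Fin k) × Equiv.Perm (Fin k) × (Fin k → Bool),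
            ((Equiv.Perm.sign t.1 : ℤ):ℂ) * ((Equiv.Perm.sign t.2.1 : ℤ):ℂ) *
            ∏ i : Fin k, F (t.1 i) (t.2.1 i) := by
          refine Finset.sum_congr rfl fun t _ => ?_
          rw [sign_Xi_cast]
          have : ∏ i : Fin k, FJ F (Xi t.1 t.2.1 t.2.2 (ev i)) (Xi t.1 t.2.1 t.2.2 (od i))
              = (∏ i : Fin k, (if t.2.2 i then (-1:ℂ) else 1)) *
                ∏ i : Fin k, F (t.1 i) (t.2.1 i) := by
            rw [← Finset.prod_mul_distrib]
            exact Finset.prod_congr rfl fun i _ => FJ_term F hF _ _ _ i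
          rw [this]
          have h4 := sq1 t.2.2
          calc ((Equiv.Perm.sign t.1 : ℤ):ℂ) * ((Equiv.Perm.sign t.2.1 : ℤ):ℂ) *
                (∏ i : Fin k, (if t.2.2 i then (-1:ℂ) else 1)) *
                ((∏ i : Fin k, (if t.2.2 i then (-1:ℂ) else 1)) *
                  ∏ i : Fin k, F (t.1 i) (t.2.1 i))
              = ((Equiv.Perm.sign t.1 : ℤ):ℂ) * ((Equiv.Perm.sign t.2.1 : ℤ):ℂ) *
                ((∏ i : Fin k, (if t.2.2 i then (-1:ℂ) else 1)) *
                 (∏ i : Fin k, (if t.2.2 i then (-1:ℂ) else 1))) *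
                ∏ i : Fin k, F (t.1 i) (t.2.1 i) := by ring
            _ = _ := by rw [h4, mul_one]
      _ = ∑ a : Equiv.Perm (Fin k), ∑ b : Equiv.Perm (Fin k), ∑ _s : Fin k → Bool,
            ((Equiv.Perm.sign a : ℤ):ℂ) * ((Equiv.Perm.sign b : ℤ):ℂ) *
            ∏ i : Fin k, F (a i) (b i) := by
          rw [Fintype.sum_prod_type]
          refine Finset.sum_congr rfl fun a _ => ?_
          rw [Fintype.sum_prod_type]
      _ = (2:ℂ)^k * (Nat.factorial k : ℂ) * F.det := by
          have hcard : (Fintype.card (Fin k → Bool) : ℂ) = (2:ℂ)^k := by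
            simp [Fintype.card_fun]
          calc ∑ a : Equiv.Perm (Fin k), ∑ b : Equiv.Perm (Fin k), ∑ _s : Fin k → Bool,
                ((Equiv.Perm.sign a : ℤ):ℂ) * ((Equiv.Perm.sign b : ℤ):ℂ) *
                ∏ i : Fin k, F (a i) (b i)
              = ∑ a : Equiv.Perm (Fin k), ∑ b : Equiv.Perm (Fin k),
                (2:ℂ)^k * (((Equiv.Perm.sign a : ℤ):ℂ) * ((Equiv.Perm.sign b : ℤ):ℂ) *
                ∏ i : Fin k, F (a i) (b i)) := by
                refine Finset.sum_congr rfl fun a _ => Finset.sum_congr rfl fun b _ => ?_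
                rw [Finset.sum_const, Finset.card_univ, nsmul_eq_mul, hcard]
            _ = (2:ℂ)^k * ∑ a : Equiv.Perm (Fin k), ∑ b : Equiv.Perm (Fin k),
                ((Equiv.Perm.sign a : ℤ):ℂ) * ((Equiv.Perm.sign b : ℤ):ℂ) *
                ∏ i : Fin k, F (a i) (b i) := by
                rw [Finset.mul_sum]
                exact Finset.sum_congr rfl fun a _ => (Finset.mul_sum _ _ _).symm
            _ = (2:ℂ)^k * ∑ a : Equiv.Perm (Fin k), F.det := by
                rw [Finset.sum_congr rfl fun a _ => hinner a]
            _ = (2:ℂ)^k * (Nat.factorial k : ℂ) * F.det := by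
                rw [Finset.sum_const, Finset.card_univ, Fintype.card_perm,
                  Fintype.card_fin, nsmul_eq_mul]
                ring
  rw [main]
  have h2 : ((2:ℂ)^k * (Nat.factorial k : ℂ)) ≠ 0 :=
    mul_ne_zero (pow_ne_zero _ two_ne_zero) (Nat.cast_ne_zero.mpr (Nat.factorial_ne_zero k))
  field_simp
  exact mul_div_cancel_left₀ _ (Nat.cast_ne_zero.mpr (Nat.factorial_ne_zero k))

end PfAux
namespace PfAux
variable {k : ℕ}

lemma jsgn_ev_ev (i j : Fin k) : jsgn (ev i) (ev j) = 0 := by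
  simp [jsgn, ev_mod]

lemma jsgn_od_od (i j : Fin k) : jsgn (od i) (od j) = 0 := by
  simp [jsgn, od_mod]

lemma FJ_ev_ev (F : Matrix (Fin k) (Fin k) ℂ) (i j : Fin k) :
    FJ F (ev i) (ev j) = 0 := by
  show F _ _ * jsgn (ev i) (ev j) = 0
  rw [jsgn_ev_ev, mul_zero]

lemma FJ_od_od (F : Matrix (Fin k) (Fin k) ℂ) (i j : Fin k) :
    FJ F (od i) (od j) = 0 := by
  show F _ _ * jsgn (od i) (od j) = 0
  rw [jsgn_od_od, mul_zero]

lemma FJ_ev_od (F : Matrix (Fin k) (Fin k) ℂ) (i j : Fin k) :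
    FJ F (ev i) (od j) = F i j := by
  show F _ _ * jsgn (ev i) (od j) = F i j
  rw [jsgn_ev_od, hv_ev, hv_od, mul_one]

lemma FJ_od_ev (F : Matrix (Fin k) (Fin k) ℂ) (i j : Fin k) :
    FJ F (od i) (ev j) = -F i j := by
  show F _ _ * jsgn (od i) (ev j) = -F i j
  rw [jsgn_od_ev, hv_ev, hv_od]
  ring

noncomputable def Dm (y : Fin k → ℂ) (j : Fin k) : Matrix (Fin 2) (Fin 2) ℂ :=
  !![1, -1; 1/(2*y j), 1/(2*y j)]

def esymm : Fin (2*k) ≃ Fin 2 × Fin k :=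
  (e2 (k := k)).symm.trans (Equiv.prodComm (Fin k) (Fin 2))

noncomputable def Bm (y : Fin k → ℂ) : Matrix (Fin (2*k)) (Fin (2*k)) ℂ :=
  (Matrix.blockDiagonal (Dm y)).submatrix ⇑(esymm (k := k)) ⇑(esymm (k := k))

lemma esymm_apply (p : Fin (2*k)) :
    esymm p = ((⟨p.1 % 2, by omega⟩ : Fin 2), hv p) := rfl

lemma det_Bm (y : Fin k → ℂ) (hy : ∀ j, y j ≠ 0) :
    (Bm y).det = ∏ j : Fin k, (y j)⁻¹ := by
  rw [Bm, Matrix.det_submatrix_equiv_self, Matrix.det_blockDiagonal]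
  refine Finset.prod_congr rfl fun j _ => ?_
  rw [Dm, Matrix.det_fin_two_of]
  field_simp [hy j]
  try ring

lemma Bm_apply (y : Fin k → ℂ) (u v : Fin (2*k)) :
    Bm y u v = if hv u = hv v then
      Dm y (hv u) (⟨u.1 % 2, by omega⟩ : Fin 2) (⟨v.1 % 2, by omega⟩ : Fin 2) else 0 := by
  rw [Bm, Matrix.submatrix_apply, esymm_apply, esymm_apply, Matrix.blockDiagonal_apply]

lemma Bm_zero (y : Fin k → ℂ) {u v : Fin (2*k)} (h : hv u ≠ hv v) : Bm y u v = 0 := by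
  rw [Bm_apply, if_neg h]

lemma fin2_ev (i : Fin k) : (⟨(ev i).1 % 2, by omega⟩ : Fin 2) = 0 := by
  apply Fin.ext; simp
lemma fin2_od (i : Fin k) : (⟨(od i).1 % 2, by omega⟩ : Fin 2) = 1 := by
  apply Fin.ext; simp

lemma Bm_ev_ev (y : Fin k → ℂ) (i j : Fin k) :
    Bm y (ev i) (ev j) = if i = j then 1 else 0 := by
  rw [Bm_apply, fin2_ev, fin2_ev, hv_ev, hv_ev]
  by_cases h : i = j <;> simp [h, Dm]

lemma Bm_ev_od (y : Fin k → ℂ) (i j : Fin k) :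
    Bm y (ev i) (od j) = if i = j then -1 else 0 := by
  rw [Bm_apply, fin2_ev, fin2_od, hv_ev, hv_od]
  by_cases h : i = j <;> simp [h, Dm]

lemma Bm_od_ev (y : Fin k → ℂ) (i j : Fin k) :
    Bm y (od i) (ev j) = if i = j then 1/(2*y j) else 0 := by
  rw [Bm_apply, fin2_od, fin2_ev, hv_od, hv_ev]
  by_cases h : i = j <;> simp [h, Dm]

lemma Bm_od_od (y : Fin k → ℂ) (i j : Fin k) :
    Bm y (od i) (od j) = if i = j then 1/(2*y j) else 0 := by
  rw [Bm_apply, fin2_od, fin2_od, hv_od, hv_od]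
  by_cases h : i = j <;> simp [h, Dm]

lemma triple_mul_apply (A B : Matrix (Fin (2*k)) (Fin (2*k)) ℂ) (p q : Fin (2*k)) :
    (Bᵀ * A * B) p q = ∑ z : Fin (2*k) × Fin (2*k), B z.1 p * A z.1 z.2 * B z.2 q := by
  rw [Fintype.sum_prod_type, Finset.sum_comm]
  simp only [Matrix.mul_apply, Matrix.transpose_apply, Finset.sum_mul]

lemma sum_collapse (g : Fin (2*k) → ℂ) (p : Fin (2*k))
    (hg : ∀ u, hv u ≠ hv p → g u = 0) :
    ∑ u, g u = g (ev (hv p)) + g (od (hv p)) := by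
  rw [sum_fin2k]
  rw [Finset.sum_eq_single (hv p)]
  · intro i _ hne
    rw [hg (ev i) (by simpa using hne), hg (od i) (by simpa using hne)]
    norm_num
  · intro h
    exact absurd (Finset.mem_univ _) h

noncomputable def gfun (y : Fin k → ℂ) (p q : Fin (2*k)) : ℂ :=
  if p.1 % 2 = 0 then
    (if q.1 % 2 = 0 then (y (hv p) - y (hv q)) / (2 * y (hv p) * y (hv q))
     else (y (hv p) + y (hv q)) / (2 * y (hv p) * y (hv q)))
  else
    (if q.1 % 2 = 0 then -((y (hv p) + y (hv q)) / (2 * y (hv p) * y (hv q)))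
     else -((y (hv p) - y (hv q)) / (2 * y (hv p) * y (hv q))))

lemma conj_eq (F : Matrix (Fin k) (Fin k) ℂ) (y : Fin k → ℂ) (hy : ∀ j, y j ≠ 0) :
    (Bm y)ᵀ * FJ F * Bm y = Matrix.of fun p q => F (hv p) (hv q) * gfun y p q := by
  ext p q
  rw [triple_mul_apply, Fintype.sum_prod_type]
  rw [sum_collapse (fun u => ∑ v, Bm y u p * FJ F u v * Bm y v q) p
    (fun u hu => Finset.sum_eq_zero fun v _ => by rw [Bm_zero y hu, zero_mul, zero_mul])]
  rw [sum_collapse (fun v => Bm y (ev (hv p)) p * FJ F (ev (hv p)) v * Bm y v q) q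
    (fun v hv' => by
      show Bm y (ev (hv p)) p * FJ F (ev (hv p)) v * Bm y v q = 0
      rw [Bm_zero y hv', mul_zero])]
  rw [sum_collapse (fun v => Bm y (od (hv p)) p * FJ F (od (hv p)) v * Bm y v q) q
    (fun v hv' => by
      show Bm y (od (hv p)) p * FJ F (od (hv p)) v * Bm y v q = 0
      rw [Bm_zero y hv', mul_zero])]
  rcases ev_or_od p with hp | hp <;> rcases ev_or_od q with hq | hq
  · rw [hp, hq]
    simp only [hv_ev, Matrix.of_apply, Bm_ev_ev, Bm_ev_od, Bm_od_ev, Bm_od_od,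
      FJ_ev_ev, FJ_ev_od, FJ_od_ev, FJ_od_od, if_pos rfl, gfun, ev_mod, od_mod]
    norm_num
    field_simp [hy (hv p), hy (hv q)]
    ring
  · rw [hp, hq]
    simp only [hv_ev, hv_od, Matrix.of_apply, Bm_ev_ev, Bm_ev_od, Bm_od_ev, Bm_od_od,
      FJ_ev_ev, FJ_ev_od, FJ_od_ev, FJ_od_od, if_pos rfl, gfun, ev_mod, od_mod]
    norm_num
    field_simp [hy (hv p), hy (hv q)]
  · rw [hp, hq]
    simp only [hv_ev, hv_od, Matrix.of_apply, Bm_ev_ev, Bm_ev_od, Bm_od_ev, Bm_od_od,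
      FJ_ev_ev, FJ_ev_od, FJ_od_ev, FJ_od_od, if_pos rfl, gfun, ev_mod, od_mod]
    norm_num
    field_simp [hy (hv p), hy (hv q)]
    ring
  · rw [hp, hq]
    simp only [hv_od, Matrix.of_apply, Bm_ev_ev, Bm_ev_od, Bm_od_ev, Bm_od_od,
      FJ_ev_ev, FJ_ev_od, FJ_od_ev, FJ_od_od, if_pos rfl, gfun, ev_mod, od_mod]
    norm_num
    field_simp [hy (hv p), hy (hv q)]
    ring

end PfAux

open PfAux

/-- Lemma `Pf det` identity: the Pfaffian of the `2k×2k` skew-symmetric matrix assembled from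
`2×2` blocks `f(x_j,x_l)·[[(y_j−y_l)/(2y_jy_l), (y_j+y_l)/(2y_jy_l)],
[−(y_j+y_l)/(2y_jy_l), −(y_j−y_l)/(2y_jy_l)]]`, times `∏ y_j`, equals `det [f(x_j,x_l)]`. -/
theorem pfaffian_block_eq_det (k : ℕ) (f : ℂ → ℂ → ℂ) (hf : ∀ x y, f x y = f y x)
    (x : Fin k → ℂ) (y : Fin k → ℂ) (hy : ∀ j, y j ≠ 0) :
    pfaffian (Matrix.of fun p q : Fin (2*k) =>
      f (x ⟨p.1/2, by have := p.2; omega⟩) (x ⟨q.1/2, by have := q.2; omega⟩) *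
        (if p.1 % 2 = 0 then
           (if q.1 % 2 = 0 then
              (y ⟨p.1/2, by have := p.2; omega⟩ - y ⟨q.1/2, by have := q.2; omega⟩) /
                (2 * y ⟨p.1/2, by have := p.2; omega⟩ * y ⟨q.1/2, by have := q.2; omega⟩)
            else
              (y ⟨p.1/2, by have := p.2; omega⟩ + y ⟨q.1/2, by have := q.2; omega⟩) /
                (2 * y ⟨p.1/2, by have := p.2; omega⟩ * y ⟨q.1/2, by have := q.2; omega⟩))
         else
           (if q.1 % 2 = 0 then
              -((y ⟨p.1/2, by have := p.2; omega⟩ + y ⟨q.1/2, by have := q.2; omega⟩) /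
                (2 * y ⟨p.1/2, by have := p.2; omega⟩ * y ⟨q.1/2, by have := q.2; omega⟩))
            else
              -((y ⟨p.1/2, by have := p.2; omega⟩ - y ⟨q.1/2, by have := q.2; omega⟩) /
                (2 * y ⟨p.1/2, by have := p.2; omega⟩ * y ⟨q.1/2, by have := q.2; omega⟩)))))
      * ∏ j : Fin k, y j
    = Matrix.det (Matrix.of fun j l : Fin k => f (x j) (x l)) := by
  classical
  set F : Matrix (Fin k) (Fin k) ℂ := Matrix.of fun j l => f (x j) (x l) with hFdef
  have hstep : (Matrix.of fun p q : Fin (2*k) =>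
      f (x ⟨p.1/2, by have := p.2; omega⟩) (x ⟨q.1/2, by have := q.2; omega⟩) *
        (if p.1 % 2 = 0 then
           (if q.1 % 2 = 0 then
              (y ⟨p.1/2, by have := p.2; omega⟩ - y ⟨q.1/2, by have := q.2; omega⟩) /
                (2 * y ⟨p.1/2, by have := p.2; omega⟩ * y ⟨q.1/2, by have := q.2; omega⟩)
            else
              (y ⟨p.1/2, by have := p.2; omega⟩ + y ⟨q.1/2, by have := q.2; omega⟩) /
                (2 * y ⟨p.1/2, by have := p.2; omega⟩ * y ⟨q.1/2, by have := q.2; omega⟩))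
         else
           (if q.1 % 2 = 0 then
              -((y ⟨p.1/2, by have := p.2; omega⟩ + y ⟨q.1/2, by have := q.2; omega⟩) /
                (2 * y ⟨p.1/2, by have := p.2; omega⟩ * y ⟨q.1/2, by have := q.2; omega⟩))
            else
              -((y ⟨p.1/2, by have := p.2; omega⟩ - y ⟨q.1/2, by have := q.2; omega⟩) /
                (2 * y ⟨p.1/2, by have := p.2; omega⟩ * y ⟨q.1/2, by have := q.2; omega⟩)))))
      = (Bm y)ᵀ * FJ F * Bm y := by
    rw [conj_eq F y hy]
    rfl
  rw [hstep, pf_congruence, pf_FJ F (fun i l => hf (x i) (x l)), det_Bm y hy]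
  have hprod : (∏ j : Fin k, (y j)⁻¹) * (∏ j : Fin k, y j) = 1 := by
    rw [← Finset.prod_mul_distrib]
    exact Finset.prod_eq_one fun j _ => inv_mul_cancel₀ (hy j)
  calc (∏ j : Fin k, (y j)⁻¹) * F.det * ∏ j : Fin k, y j
      = ((∏ j : Fin k, (y j)⁻¹) * (∏ j : Fin k, y j)) * F.det := by ring
    _ = F.det := by rw [hprod, one_mul]
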